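/- arXiv:1610.06648 — 9 statements merged into one kernel-verified Lean document; each statement's English description precedes it below -/
import Mathlib

section
/- Let F and D be finite types (with decidable equality). For i = 1, 2 let E_i : Matrix F F ℝ, B_i : Matrix F D ℝ and A_i : Matrix D D ℝ, and suppose the block matrices M_i := Matrix.fromBlocks E_i B_i 0 A_i commute: M_1 * M_2 = M_2 * M_1. Suppose x : D → ℝ and ρ_1, ρ_2 : ℝ satisfy A_i *ᵥ x = ρ_i • x for i = 1, 2, and that the matrices ρ_1 • 1 − E_1 and ρ_2 • 1 − E_2 are invertible (IsUnit). Then (ρ_1 • 1 − E_1)⁻¹ *ᵥ (B_1 *ᵥ x) = (ρ_2 • 1 − E_2)⁻¹ *ᵥ (B_2 *ᵥ x). (This is Proposition 6.1(1) of the paper: the 'exit vector' (ρ(A_{D,i})1_F − E_i)^{-1} B_i x is independent of i.) -/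
open Matrix

theorem stmt0 {F D : Type*} [Fintype F] [Fintype D] [DecidableEq F] [DecidableEq D]
    (E₁ E₂ : Matrix F F ℝ) (B₁ B₂ : Matrix F D ℝ) (A₁ A₂ : Matrix D D ℝ)
    (hcomm : Matrix.fromBlocks E₁ B₁ 0 A₁ * Matrix.fromBlocks E₂ B₂ 0 A₂ =
      Matrix.fromBlocks E₂ B₂ 0 A₂ * Matrix.fromBlocks E₁ B₁ 0 A₁)
    (x : D → ℝ) (ρ₁ ρ₂ : ℝ)
    (hx₁ : A₁ *ᵥ x = ρ₁ • x) (hx₂ : A₂ *ᵥ x = ρ₂ • x)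
    (hU₁ : IsUnit (ρ₁ • (1 : Matrix F F ℝ) - E₁))
    (hU₂ : IsUnit (ρ₂ • (1 : Matrix F F ℝ) - E₂)) :
    (ρ₁ • (1 : Matrix F F ℝ) - E₁)⁻¹ *ᵥ (B₁ *ᵥ x) =
      (ρ₂ • (1 : Matrix F F ℝ) - E₂)⁻¹ *ᵥ (B₂ *ᵥ x) := by
  set S₁ := ρ₁ • (1 : Matrix F F ℝ) - E₁ with hS₁
  set S₂ := ρ₂ • (1 : Matrix F F ℝ) - E₂ with hS₂
  rw [Matrix.fromBlocks_multiply, Matrix.fromBlocks_multiply] at hcomm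
  have hE : E₁ * E₂ = E₂ * E₁ := by
    have := congrArg Matrix.toBlocks₁₁ hcomm
    simpa using this
  have hB : E₁ * B₂ + B₁ * A₂ = E₂ * B₁ + B₂ * A₁ := by
    have := congrArg Matrix.toBlocks₁₂ hcomm
    simpa using this
  -- key vector identity: S₂ *ᵥ (B₁ *ᵥ x) = S₁ *ᵥ (B₂ *ᵥ x)
  have key : S₂ *ᵥ (B₁ *ᵥ x) = S₁ *ᵥ (B₂ *ᵥ x) := by
    have h := congrArg (fun M => M *ᵥ x) hB
    simp only [Matrix.add_mulVec, ← Matrix.mulVec_mulVec] at h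
    rw [hx₁, hx₂, Matrix.mulVec_smul] at h
    rw [hS₁, hS₂, Matrix.sub_mulVec, Matrix.sub_mulVec, Matrix.smul_mulVec,
      Matrix.smul_mulVec, Matrix.one_mulVec, Matrix.one_mulVec]
    have h' : E₁ *ᵥ (B₂ *ᵥ x) + ρ₂ • (B₁ *ᵥ x) = E₂ *ᵥ (B₁ *ᵥ x) + ρ₁ • (B₂ *ᵥ x) := by
      simpa [Matrix.mulVec_smul] using h
    have := congrArg (fun v => v - E₁ *ᵥ (B₂ *ᵥ x) - E₂ *ᵥ (B₁ *ᵥ x)) h'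
    beta_reduce at this
    abel_nf at this ⊢
    linear_combination (norm := abel_nf) this
  have hd₁ := (Matrix.isUnit_iff_isUnit_det S₁).mp hU₁
  have hd₂ := (Matrix.isUnit_iff_isUnit_det S₂).mp hU₂
  have hScomm : S₁ * S₂ = S₂ * S₁ := by
    rw [hS₁, hS₂]
    simp only [Matrix.sub_mul, Matrix.mul_sub, Matrix.smul_mul, Matrix.mul_smul,
      Matrix.one_mul, Matrix.mul_one, hE]
    module
  have hinv : S₁⁻¹ * S₂⁻¹ = S₂⁻¹ * S₁⁻¹ := by
    rw [← Matrix.mul_inv_rev, ← Matrix.mul_inv_rev, hScomm]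
  have hL : S₂⁻¹ * S₁⁻¹ * S₂ = S₁⁻¹ := by
    rw [← hinv, Matrix.mul_assoc, Matrix.nonsing_inv_mul S₂ hd₂, Matrix.mul_one]
  have hR : S₂⁻¹ * S₁⁻¹ * S₁ = S₂⁻¹ := by
    rw [Matrix.mul_assoc, Matrix.nonsing_inv_mul S₁ hd₁, Matrix.mul_one]
  have h2 := congrArg (fun v => (S₂⁻¹ * S₁⁻¹) *ᵥ v) key
  simp only [Matrix.mulVec_mulVec, ← Matrix.mul_assoc, hL, hR] at h2
  simpa only [Matrix.mulVec_mulVec] using h2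
end

section
/- Let F and D be finite types. For i = 1, 2 let E_i : Matrix F F ℝ, B_i : Matrix F D ℝ and A_i : Matrix D D ℝ satisfy the commutation relation E_1 * B_2 + B_1 * A_2 = E_2 * B_1 + B_2 * A_1 (an equality of F×D matrices). Suppose x : D → ℝ and ρ_1, ρ_2 : ℝ satisfy A_i *ᵥ x = ρ_i • x for i = 1, 2. Then (ρ_1 • 1 − E_1) *ᵥ (B_2 *ᵥ x) = (ρ_2 • 1 − E_2) *ᵥ (B_1 *ᵥ x). (This is the key identity established in the proof of Proposition 6.1; the commutation relation is exactly the top-right block of the relation A_iA_j = A_jA_i for the vertex matrices of a k-graph.) -/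
open Matrix

theorem stmt1 {F D : Type*} [Fintype F] [Fintype D] [DecidableEq F]
    (E₁ E₂ : Matrix F F ℝ) (B₁ B₂ : Matrix F D ℝ) (A₁ A₂ : Matrix D D ℝ)
    (hcomm : E₁ * B₂ + B₁ * A₂ = E₂ * B₁ + B₂ * A₁)
    (x : D → ℝ) (ρ₁ ρ₂ : ℝ)
    (hx₁ : A₁ *ᵥ x = ρ₁ • x) (hx₂ : A₂ *ᵥ x = ρ₂ • x) :
    (ρ₁ • (1 : Matrix F F ℝ) - E₁) *ᵥ (B₂ *ᵥ x) =
      (ρ₂ • (1 : Matrix F F ℝ) - E₂) *ᵥ (B₁ *ᵥ x) := by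
  have h := congrArg (· *ᵥ x) hcomm
  simp only [add_mulVec, ← mulVec_mulVec, hx₁, hx₂, mulVec_smul] at h
  simp only [sub_mulVec, smul_mulVec, one_mulVec]
  linear_combination (norm := module) -h
end

section
/- Let V be a finite type, A : Matrix V V ℝ a matrix with nonnegative entries, m : V → ℝ an entrywise nonnegative vector, and ρ : ℝ with 0 ≤ ρ. Suppose the subinvariance inequality A *ᵥ m ≤ ρ • m holds entrywise. Then: (a) for every n : ℕ, A^n *ᵥ m ≤ ρ^n • m entrywise; and (b) if v, w : V, n : ℕ and S is a finite set of vertices with w ∉ S such that 0 < (A^n) v w and ρ^n * m v ≤ ∑_{u ∈ S} (A^n) v u * m u, then m w = 0. (This is the key computation in the proof of Theorem 5.1: if a subinvariant vector restricts to a Perron–Frobenius eigenvector on a critical component C, then it vanishes at every vertex w reachable from C by paths of the critical colour.) -/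
open Matrix

theorem stmt6 {V : Type*} [Fintype V] [DecidableEq V]
    (A : Matrix V V ℝ) (hA : ∀ i j, 0 ≤ A i j) (m : V → ℝ) (hm : ∀ v, 0 ≤ m v)
    (ρ : ℝ) (hρ : 0 ≤ ρ) (hsub : A *ᵥ m ≤ ρ • m) :
    (∀ n : ℕ, A ^ n *ᵥ m ≤ ρ ^ n • m) ∧
      (∀ (v w : V) (n : ℕ) (S : Finset V), w ∉ S → 0 < (A ^ n) v w →
        ρ ^ n * m v ≤ ∑ u ∈ S, (A ^ n) v u * m u → m w = 0) := by
  have hAn : ∀ n : ℕ, ∀ i j, 0 ≤ (A ^ n) i j := by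
    intro n
    induction n with
    | zero => intro i j; simp [Matrix.one_apply]; positivity
    | succ k ih =>
      intro i j
      rw [pow_succ, Matrix.mul_apply]
      exact Finset.sum_nonneg fun u _ => mul_nonneg (ih i u) (hA u j)
  have key : ∀ n : ℕ, A ^ n *ᵥ m ≤ ρ ^ n • m := by
    intro n
    induction n with
    | zero => simp
    | succ k ih =>
      have : A ^ (k + 1) *ᵥ m = A ^ k *ᵥ (A *ᵥ m) := by
        rw [pow_succ, ← Matrix.mulVec_mulVec]
      rw [this]
      intro i
      calc (A ^ k *ᵥ (A *ᵥ m)) i ≤ (A ^ k *ᵥ (ρ • m)) i := by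
            rw [Matrix.mulVec, Matrix.mulVec]
            apply Finset.sum_le_sum
            intro u _
            exact mul_le_mul_of_nonneg_left (hsub u) (hAn k i u)
        _ = ρ * (A ^ k *ᵥ m) i := by
            simp [Matrix.mulVec, Finset.mul_sum, dotProduct]
            exact Finset.sum_congr rfl fun u _ => by ring
        _ ≤ ρ * (ρ ^ k * m i) := mul_le_mul_of_nonneg_left (ih i) hρ
        _ = (ρ ^ (k + 1) • m) i := by simp [pow_succ]; ring
  refine ⟨key, fun v w n S hwS hpos hle => ?_⟩
  have h1 : ∑ u, (A ^ n) v u * m u ≤ ρ ^ n * m v := key n v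
  have h2 : ∑ u ∈ S, (A ^ n) v u * m u + (A ^ n) v w * m w ≤ ∑ u, (A ^ n) v u * m u := by
    rw [add_comm, ← Finset.sum_insert (f := fun u => (A ^ n) v u * m u) hwS]
    exact Finset.sum_le_sum_of_subset_of_nonneg (Finset.subset_univ _)
      (fun u _ _ => mul_nonneg (hAn n v u) (hm u))
  have h3 : (A ^ n) v w * m w ≤ 0 := by linarith
  have h4 : 0 ≤ (A ^ n) v w * m w := mul_nonneg (hAn n v w) (hm w)
  have h5 : (A ^ n) v w * m w = 0 := le_antisymm h3 h4
  rcases mul_eq_zero.mp h5 with h | h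
  · exact absurd h hpos.ne'
  · exact h
end

section
/- Let V be a finite nonempty type and r : V → V → Prop a relation such that every vertex has a successor: for all v there exists w with r v w. Then there exists a vertex v lying on a cycle (Relation.TransGen r v v) whose strongly connected component has no exit: for every w, if Relation.ReflTransGen r v w then Relation.ReflTransGen r w v. (This is the first claim established in the proof of Proposition 3.1: a finite k-graph without sinks or sources has at least one strongly connected component that is forwards hereditary.) -/
theorem stmt8 {V : Type*} [Fintype V] [Nonempty V] (r : V → V → Prop)
    (hsucc : ∀ v, ∃ w, r v w) :
    ∃ v, Relation.TransGen r v v ∧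
      ∀ w, Relation.ReflTransGen r v w → Relation.ReflTransGen r w v := by
  classical
  set s : V → V → Prop := fun a b =>
    Relation.ReflTransGen r b a ∧ ¬ Relation.ReflTransGen r a b with hs
  have htrans : Transitive s := by
    rintro a b c ⟨hba, hab⟩ ⟨hcb, hbc⟩
    exact ⟨hcb.trans hba, fun h => hab (h.trans hcb)⟩
  have hirr : Irreflexive s := fun a ⟨h1, h2⟩ => h2 h1
  haveI : IsTrans V s := ⟨htrans⟩
  haveI : IsIrrefl V s := ⟨hirr⟩
  have hwf : WellFounded s := Finite.wellFounded_of_trans_of_irrefl s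
  obtain ⟨m, _, hmin⟩ := hwf.has_min Set.univ ⟨Classical.arbitrary V, trivial⟩
  have hmax : ∀ w, Relation.ReflTransGen r m w → Relation.ReflTransGen r w m := by
    intro w hw
    by_contra h
    exact hmin w trivial ⟨hw, h⟩
  obtain ⟨u, hu⟩ := hsucc m
  exact ⟨m, Relation.TransGen.head' hu (hmax u (Relation.ReflTransGen.single hu)), hmax⟩
end

section
/- Let V be a finite type and let s, r : V → V → Prop be relations with s ≤ r (every s-edge is an r-edge). Assume: (i) every vertex has an s-successor and an s-predecessor (for all v there exist w, w' with s v w and s w' v); (ii) C and D are disjoint subsets of V, each strongly connected for r (any two of its elements are mutually r-reachable); (iii) every vertex lying on an r-cycle belongs to C ∪ D; and (iv) no element of D is r-reachable from any element of C (for all c ∈ C, d ∈ D, ¬ Relation.ReflTransGen r c d). Then for every vertex w ∉ C ∪ D there exist c ∈ C with Relation.ReflTransGen s w c and d ∈ D with Relation.ReflTransGen s d w; that is, w admits a single-colour path into C and receives a single-colour path from D. (This is Lemma 7.2 of the paper, stated for the reachability relation r of the whole k-graph and the edge relation s of one coordinate colour.) -/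
lemma stmt9_aux {V : Type*} [Fintype V] (s : V → V → Prop)
    (hs : ∀ v, ∃ w, s v w) (w : V) :
    ∃ x, Relation.ReflTransGen s w x ∧ Relation.TransGen s x x := by
  choose f hf using hs
  have key : ∀ n v, Relation.ReflTransGen s v (f^[n] v) := by
    intro n
    induction n with
    | zero => intro v; exact .refl
    | succ n ih =>
      intro v
      rw [Function.iterate_succ_apply]
      exact .head (hf v) (ih (f v))
  have key2 : ∀ n v, 0 < n → Relation.TransGen s v (f^[n] v) := by
    intro n v hn
    obtain ⟨m, rfl⟩ := Nat.exists_eq_succ_of_ne_zero hn.ne'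
    rw [Function.iterate_succ_apply]
    exact (Relation.TransGen.single (hf v)).trans_left (key m (f v))
  obtain ⟨a, b, hne, hab⟩ := Finite.exists_ne_map_eq_of_infinite (fun n : ℕ => f^[n] w)
  rcases hne.lt_or_gt with h | h
  · refine ⟨f^[a] w, key a w, ?_⟩
    have : f^[b - a] (f^[a] w) = f^[a] w := by
      rw [← Function.iterate_add_apply, Nat.sub_add_cancel h.le, ← hab]
    have := key2 (b - a) (f^[a] w) (by omega)
    rwa [‹f^[b-a] (f^[a] w) = f^[a] w›] at this
  · refine ⟨f^[b] w, key b w, ?_⟩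
    have heq : f^[a - b] (f^[b] w) = f^[b] w := by
      rw [← Function.iterate_add_apply, Nat.sub_add_cancel h.le, hab]
    have := key2 (a - b) (f^[b] w) (by omega)
    rwa [heq] at this

theorem stmt9 {V : Type*} [Fintype V] (s r : V → V → Prop)
    (hsr : ∀ v w, s v w → r v w)
    (hs_succ : ∀ v, ∃ w, s v w) (hs_pred : ∀ v, ∃ w, s w v)
    (C D : Set V) (hdisj : Disjoint C D)
    (hC : ∀ u ∈ C, ∀ v ∈ C, Relation.ReflTransGen r u v)
    (hD : ∀ u ∈ D, ∀ v ∈ D, Relation.ReflTransGen r u v)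
    (hcycle : ∀ v, Relation.TransGen r v v → v ∈ C ∪ D)
    (hCD : ∀ c ∈ C, ∀ d ∈ D, ¬ Relation.ReflTransGen r c d)
    (w : V) (hw : w ∉ C ∪ D) :
    (∃ c ∈ C, Relation.ReflTransGen s w c) ∧
      (∃ d ∈ D, Relation.ReflTransGen s d w) := by
  obtain ⟨x, hwx, hxx⟩ := stmt9_aux s hs_succ w
  obtain ⟨y, hwy, hyy⟩ := stmt9_aux (Function.swap s) (fun v => hs_pred v) w
  have hyw : Relation.ReflTransGen s y w := by
    rwa [Relation.reflTransGen_swap] at hwy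
  have hyy' : Relation.TransGen s y y := by
    rwa [Relation.transGen_swap] at hyy
  have hxCD : x ∈ C ∪ D := hcycle x (Relation.TransGen.mono hsr x x hxx)
  have hyCD : y ∈ C ∪ D := hcycle y (Relation.TransGen.mono hsr y y hyy')
  have hwxr : Relation.ReflTransGen r w x := Relation.ReflTransGen.mono hsr w x hwx
  have hywr : Relation.ReflTransGen r y w := Relation.ReflTransGen.mono hsr y w hyw
  have htg : ∀ {a b : V}, Relation.ReflTransGen r a b → a ≠ b → Relation.TransGen r a b := by
    intro a b h hne
    rcases h.cases_head with rfl | ⟨c, hac, hcb⟩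
    · exact absurd rfl hne
    · exact Relation.TransGen.head' hac hcb
  have hcontra : ∀ S : Set V, (∀ u ∈ S, ∀ v ∈ S, Relation.ReflTransGen r u v) →
      x ∈ S → y ∈ S → False := by
    intro S hS hx hy
    have hwne : w ≠ x := by rintro rfl; exact hw hxCD
    have : Relation.TransGen r w w :=
      ((htg hwxr hwne).trans_left (hS x hx y hy)).trans_left hywr
    exact hw (hcycle w this)
  rcases hxCD with hxC | hxD
  · rcases hyCD with hyC | hyD
    · exact absurd (hcontra C hC hxC hyC) (fun h => h)
    · exact ⟨⟨x, hxC, hwx⟩, ⟨y, hyD, hyw⟩⟩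
  · rcases hyCD with hyC | hyD
    · exact absurd (hywr.trans hwxr) (hCD y hyC x hxD)
    · exact absurd (hcontra D hD hxD hyD) (fun h => h)
end

section
/- Let V be a finite type and let s, r : V → V → Prop be relations with s ≤ r. Assume: (i) every vertex has an s-successor and an s-predecessor; (ii) C and D are disjoint subsets of V, each strongly connected for r; (iii) every vertex lying on an r-cycle belongs to C ∪ D; (iv) no element of D is r-reachable from any element of C; and (v) there exists a vertex w₀ with w₀ ∉ C ∪ D. Then there exist d ∈ D and c ∈ C with Relation.ReflTransGen s d c: there is a path of the single colour s from D to C. (This is Corollary 7.4 of the paper: if C ∪ D is a proper subset of the vertex set, then there are paths of every colour from D to C.) -/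
lemma aux_cycle {V : Type*} [Fintype V] (s : V → V → Prop) (h : ∀ v, ∃ w, s v w) (v : V) :
    ∃ y, Relation.ReflTransGen s v y ∧ Relation.TransGen s y y := by
  choose f hf using h
  have key : ∀ k x, Relation.ReflTransGen s x (f^[k] x) := by
    intro k x
    induction k with
    | zero => exact .refl
    | succ k ih => rw [Function.iterate_succ_apply']; exact ih.tail (hf _)
  have key2 : ∀ k x, Relation.TransGen s x (f^[k+1] x) := by
    intro k x
    induction k with
    | zero => exact .single (hf x)
    | succ k ih => rw [Function.iterate_succ_apply']; exact (ih).tail (hf _)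
  obtain ⟨a, b, hab, heq⟩ := Finite.exists_ne_map_eq_of_infinite (fun k : ℕ => f^[k] v)
  wlog hlt : a < b generalizing a b
  · exact this b a hab.symm heq.symm (by omega)
  refine ⟨f^[a] v, key a v, ?_⟩
  have : f^[b - a - 1 + 1] (f^[a] v) = f^[a] v := by
    rw [← Function.iterate_add_apply]
    have : b - a - 1 + 1 + a = b := by omega
    rw [this]
    exact heq.symm
  have h2 := key2 (b - a - 1) (f^[a] v)
  rwa [this] at h2

theorem stmt10 {V : Type*} [Fintype V] (s r : V → V → Prop)
    (hsr : ∀ v w, s v w → r v w)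
    (hs_succ : ∀ v, ∃ w, s v w) (hs_pred : ∀ v, ∃ w, s w v)
    (C D : Set V) (hdisj : Disjoint C D)
    (hC : ∀ u ∈ C, ∀ v ∈ C, Relation.ReflTransGen r u v)
    (hD : ∀ u ∈ D, ∀ v ∈ D, Relation.ReflTransGen r u v)
    (hcycle : ∀ v, Relation.TransGen r v v → v ∈ C ∪ D)
    (hCD : ∀ c ∈ C, ∀ d ∈ D, ¬ Relation.ReflTransGen r c d)
    (w₀ : V) (hw₀ : w₀ ∉ C ∪ D) :
    ∃ d ∈ D, ∃ c ∈ C, Relation.ReflTransGen s d c := by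
  obtain ⟨y, hvy, hyy⟩ := aux_cycle s hs_succ w₀
  obtain ⟨x, hxw, hxx⟩ := aux_cycle (Function.swap s) (fun v => hs_pred v) w₀
  rw [Relation.reflTransGen_swap] at hxw
  rw [Relation.transGen_swap] at hxx
  have hyCD : y ∈ C ∪ D := hcycle y (Relation.TransGen.mono hsr _ _ hyy)
  have hxCD : x ∈ C ∪ D := hcycle x (Relation.TransGen.mono hsr _ _ hxx)
  have hrxw : Relation.ReflTransGen r x w₀ := Relation.ReflTransGen.mono hsr _ _ hxw
  have hrwy : Relation.ReflTransGen r w₀ y := Relation.ReflTransGen.mono hsr _ _ hvy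
  have hwy : w₀ ≠ y := by rintro rfl; exact hw₀ hyCD
  have hwx : w₀ ≠ x := by rintro rfl; exact hw₀ hxCD
  have htwy : Relation.TransGen r w₀ y :=
    (Relation.reflTransGen_iff_eq_or_transGen.mp hrwy).resolve_left (fun h => hwy h.symm)
  cases hxCD with
  | inl hxC =>
    cases hyCD with
    | inl hyC =>
      -- w₀ lies on an r-cycle through C
      exact absurd (hcycle w₀ ((htwy.trans_left (hC y hyC x hxC)).trans_left hrxw)) hw₀
    | inr hyD => exact absurd (hrxw.trans hrwy) (hCD x hxC y hyD)
  | inr hxD =>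
    cases hyCD with
    | inl hyC => exact ⟨x, hxD, y, hyC, hxw.trans hvy⟩
    | inr hyD =>
      exact absurd (hcycle w₀ ((htwy.trans_left (hD y hyD x hxD)).trans_left hrxw)) hw₀
end

section
/- Let V be a finite type and let s, r : V → V → Prop be relations with s ≤ r. Assume: (i) every vertex has an s-successor and an s-predecessor; (ii) C and D are disjoint subsets of V, each strongly connected for r; (iii) every vertex lying on an r-cycle belongs to C ∪ D; and (iv) no element of D is r-reachable from any element of C. Then D is hereditary: for every u : V and d ∈ D, if Relation.ReflTransGen r u d then u ∈ D. (This is Corollary 7.3 of the paper: in a finite k-graph with no sinks or sources and exactly two nontrivial strongly connected components, the component D not lying above the other is hereditary.) -/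
theorem stmt11 {V : Type*} [Fintype V] (s r : V → V → Prop)
    (hsr : ∀ v w, s v w → r v w)
    (hs_succ : ∀ v, ∃ w, s v w) (hs_pred : ∀ v, ∃ w, s w v)
    (C D : Set V) (hdisj : Disjoint C D)
    (hC : ∀ u ∈ C, ∀ v ∈ C, Relation.ReflTransGen r u v)
    (hD : ∀ u ∈ D, ∀ v ∈ D, Relation.ReflTransGen r u v)
    (hcycle : ∀ v, Relation.TransGen r v v → v ∈ C ∪ D)
    (hCD : ∀ c ∈ C, ∀ d ∈ D, ¬ Relation.ReflTransGen r c d) :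
    ∀ u : V, ∀ d ∈ D, Relation.ReflTransGen r u d → u ∈ D := by
  intro u d hd hud
  classical
  -- choose an s-predecessor function
  choose g hg using hs_pred
  set f : ℕ → V := fun n => g^[n] u with hf
  have hstep : ∀ n, r (f (n + 1)) (f n) := by
    intro n
    have : f (n + 1) = g (f n) := by
      simp [hf, Function.iterate_succ_apply']
    rw [this]
    exact hsr _ _ (hg _)
  have hchain : ∀ i k, Relation.ReflTransGen r (f (i + k)) (f i) := by
    intro i k
    induction k with
    | zero => exact Relation.ReflTransGen.refl
    | succ k ih => exact Relation.ReflTransGen.head (hstep (i + k)) ih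
  -- pigeonhole: find a repeat
  obtain ⟨i, j, hne, heq⟩ := Finite.exists_ne_map_eq_of_infinite f
  wlog hij : i < j generalizing i j
  · exact this j i hne.symm heq.symm (by omega)
  obtain ⟨k, rfl⟩ : ∃ k, j = i + k + 1 := ⟨j - i - 1, by omega⟩
  have hcyc : Relation.TransGen r (f (i + k + 1)) (f (i + k + 1)) := by
    have h : Relation.TransGen r (f (i + k + 1)) (f i) :=
      Relation.TransGen.head' (hstep (i + k)) (hchain i k)
    rw [heq] at h
    exact h
  set v := f (i + k + 1) with hv
  have hvu : Relation.ReflTransGen r v u := by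
    have := hchain 0 (i + k + 1)
    simpa [hf, hv] using this
  have hvCD := hcycle v hcyc
  have hvD : v ∈ D := by
    rcases hvCD with h | h
    · exact absurd (hvu.trans hud) (hCD v h d hd)
    · exact h
  -- now v ∈ D reaches u, and u reaches d ∈ D
  by_cases hud' : u = d
  · exact hud' ▸ hd
  · have hud2 : Relation.TransGen r u d :=
      (Relation.reflTransGen_iff_eq_or_transGen.mp hud).resolve_left (fun h => hud' h.symm)
    have hdu : Relation.ReflTransGen r d u := (hD d hd v hvD).trans hvu
    have : Relation.TransGen r u u := Relation.TransGen.trans_left hud2 hdu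
    rcases hcycle u this with h | h
    · exact absurd hud (hCD u h d hd)
    · exact h
end

section
/- Let V be a finite type and r : V → V → Prop a relation such that every vertex has a successor and a predecessor (for all v there exist w, w' with r v w and r w' v). Suppose that any two vertices lying on cycles are mutually reachable: for all u, v, if Relation.TransGen r u u and Relation.TransGen r v v then Relation.ReflTransGen r u v. Then every vertex lies on a cycle (Relation.TransGen r v v for all v), and the graph is strongly connected: Relation.ReflTransGen r u v for all u, v. (This is the claim of §7.1 of the paper: in a finite k-graph with no sinks or sources having exactly one nontrivial strongly connected component C, every vertex connects forwards and backwards to C, so C is the whole vertex set.) -/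
lemma aux_reach_cycle {V : Type*} [Fintype V] (r : V → V → Prop)
    (hsucc : ∀ v, ∃ w, r v w) (v : V) :
    ∃ c, Relation.ReflTransGen r v c ∧ Relation.TransGen r c c := by
  classical
  choose f hf using hsucc
  have hiter : ∀ n x, Relation.ReflTransGen r x (f^[n] x) := by
    intro n
    induction n with
    | zero => intro x; exact Relation.ReflTransGen.refl
    | succ n ih =>
      intro x
      rw [Function.iterate_succ_apply]
      exact (Relation.ReflTransGen.single (hf x)).trans (ih (f x))
  have htrans : ∀ n x, Relation.TransGen r x (f^[n+1] x) := by
    intro n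
    induction n with
    | zero => intro x; simpa using Relation.TransGen.single (hf x)
    | succ n ih =>
      intro x
      rw [Function.iterate_succ_apply]
      exact (Relation.TransGen.single (hf x)).trans (ih (f x))
  obtain ⟨m, n, hmn, heq⟩ := Finite.exists_ne_map_eq_of_infinite (fun n => f^[n] v)
  rcases Nat.lt_or_ge m n with h | h
  · refine ⟨f^[m] v, hiter m v, ?_⟩
    have : f^[n - m - 1 + 1] (f^[m] v) = f^[m] v := by
      rw [← Function.iterate_add_apply]
      have : n - m - 1 + 1 + m = n := by omega
      rw [this, heq]
    have := htrans (n - m - 1) (f^[m] v)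
    rwa [‹f^[n - m - 1 + 1] (f^[m] v) = f^[m] v›] at this
  · have hlt : n < m := lt_of_le_of_ne h (fun h' => hmn h'.symm)
    refine ⟨f^[n] v, hiter n v, ?_⟩
    have heq' : f^[m - n - 1 + 1] (f^[n] v) = f^[n] v := by
      rw [← Function.iterate_add_apply]
      have : m - n - 1 + 1 + n = m := by omega
      rw [this, ← heq]
    have := htrans (m - n - 1) (f^[n] v)
    rwa [heq'] at this

theorem stmt12 {V : Type*} [Fintype V] (r : V → V → Prop)
    (hsucc : ∀ v, ∃ w, r v w) (hpred : ∀ v, ∃ w, r w v)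
    (hconn : ∀ u v, Relation.TransGen r u u → Relation.TransGen r v v →
      Relation.ReflTransGen r u v) :
    (∀ v, Relation.TransGen r v v) ∧ ∀ u v, Relation.ReflTransGen r u v := by
  have hcyc : ∀ v, Relation.TransGen r v v := by
    intro v
    obtain ⟨c, hvc, hcc⟩ := aux_reach_cycle r hsucc v
    obtain ⟨c', hvc', hcc'⟩ := aux_reach_cycle (Function.swap r) hpred v
    have hvc'2 : Relation.ReflTransGen r c' v := by
      rwa [← Relation.reflTransGen_swap]
    have hcc'2 : Relation.TransGen r c' c' := by
      rwa [← Relation.transGen_swap]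
    -- v →* c →+ c →* c' →* v
    have h1 : Relation.ReflTransGen r c c' := hconn c c' hcc hcc'2
    have : Relation.TransGen r v v :=
      (Relation.TransGen.trans_right hvc (hcc.trans_left (h1.trans hvc'2)))
    exact this
  refine ⟨hcyc, fun u v => hconn u v (hcyc u) (hcyc v)⟩
end

section
/- Let m and n be natural numbers with 2 ≤ m and 2 ≤ n. Then the real numbers log m and log n are rationally dependent — that is, there exist integers a and b, not both zero, with a * Real.log m = b * Real.log n — if and only if there exist positive natural numbers k, c, d with c and d coprime (Nat.Coprime c d) such that m = k^c and n = k^d. (This is Proposition A.1 of the paper.) -/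
private lemma exists_pow_of_dvd_factorization (m b : ℕ) (hm : m ≠ 0)
    (h : ∀ p, b ∣ m.factorization p) : ∃ k, m = k ^ b := by
  refine ⟨m.factorization.prod fun p e => p ^ (e / b), ?_⟩
  conv_lhs => rw [← Nat.factorization_prod_pow_eq_self hm]
  rw [Finsupp.prod, Finsupp.prod, ← Finset.prod_pow]
  refine Finset.prod_congr rfl fun p _ => ?_
  rw [← pow_mul, Nat.div_mul_cancel (h p)]

private lemma key (m n A B : ℕ) (hm : 2 ≤ m) (hn : 2 ≤ n) (hA : 0 < A) (hB : 0 < B)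
    (h : m ^ A = n ^ B) :
    ∃ k c d : ℕ, 0 < k ∧ 0 < c ∧ 0 < d ∧ Nat.Coprime c d ∧ m = k ^ c ∧ n = k ^ d := by
  set g := Nat.gcd A B with hg
  have hg0 : 0 < g := Nat.gcd_pos_of_pos_left _ hA
  set a' := A / g with ha'
  set b' := B / g with hb'
  have hAg : a' * g = A := Nat.div_mul_cancel (Nat.gcd_dvd_left A B)
  have hBg : b' * g = B := Nat.div_mul_cancel (Nat.gcd_dvd_right A B)
  have ha'0 : 0 < a' := by
    rcases Nat.eq_zero_or_pos a' with h0 | h0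
    · simp [h0] at hAg; omega
    · exact h0
  have hb'0 : 0 < b' := by
    rcases Nat.eq_zero_or_pos b' with h0 | h0
    · simp [h0] at hBg; omega
    · exact h0
  have hcop : Nat.Coprime a' b' := Nat.coprime_div_gcd_div_gcd hg0
  have hkey : m ^ a' = n ^ b' := by
    have : (m ^ a') ^ g = (n ^ b') ^ g := by
      rw [← pow_mul, ← pow_mul, hAg, hBg, h]
    exact Nat.pow_left_injective hg0.ne' this
  have hfac : ∀ p, a' * m.factorization p = b' * n.factorization p := by
    intro p
    have := congrArg Nat.factorization hkey
    rw [Nat.factorization_pow, Nat.factorization_pow] at this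
    have := DFunLike.congr_fun this p
    simpa using this
  have hdvd : ∀ p, b' ∣ m.factorization p := by
    intro p
    have : b' ∣ m.factorization p * a' := ⟨n.factorization p, by rw [mul_comm (m.factorization p)]; rw [hfac p]⟩
    exact (hcop.symm).dvd_of_dvd_mul_right this
  obtain ⟨k, hk⟩ := exists_pow_of_dvd_factorization m b' (by omega) hdvd
  have hk0 : 0 < k := by
    rcases Nat.eq_zero_or_pos k with h0 | h0
    · rw [h0, zero_pow (by omega)] at hk; omega
    · exact h0
  have hnk : n = k ^ a' := by
    have : (k ^ a') ^ b' = n ^ b' := by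
      rw [← pow_mul, mul_comm, pow_mul, ← hk, hkey]
    exact (Nat.pow_left_injective hb'0.ne' this).symm
  exact ⟨k, b', a', hk0, hb'0, ha'0, hcop.symm, hk, hnk⟩

theorem stmt13 (m n : ℕ) (hm : 2 ≤ m) (hn : 2 ≤ n) :
    (∃ a b : ℤ, (a ≠ 0 ∨ b ≠ 0) ∧ (a : ℝ) * Real.log m = (b : ℝ) * Real.log n) ↔
      ∃ k c d : ℕ, 0 < k ∧ 0 < c ∧ 0 < d ∧ Nat.Coprime c d ∧ m = k ^ c ∧ n = k ^ d := by
  have hlm : 0 < Real.log m := Real.log_pos (by exact_mod_cast hm)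
  have hln : 0 < Real.log n := Real.log_pos (by exact_mod_cast hn)
  constructor
  · rintro ⟨a, b, hne, hab⟩
    have ha : a ≠ 0 := by
      rintro rfl
      simp only [Int.cast_zero, zero_mul] at hab
      have hb : (b : ℝ) = 0 := by
        rcases mul_eq_zero.mp hab.symm with h | h
        · exact h
        · linarith
      have : b = 0 := by exact_mod_cast hb
      exact hne.resolve_left (by simp) this
    have hb : b ≠ 0 := by
      rintro rfl
      simp only [Int.cast_zero, zero_mul] at hab
      rcases mul_eq_zero.mp hab with h | h
      · exact ha (by exact_mod_cast h)
      · linarith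
    have habs : (a.natAbs : ℝ) * Real.log m = (b.natAbs : ℝ) * Real.log n := by
      have := congrArg abs hab
      rw [abs_mul, abs_mul, abs_of_pos hlm, abs_of_pos hln] at this
      rw [Nat.cast_natAbs, Nat.cast_natAbs]
      push_cast
      exact this
    have hA : 0 < a.natAbs := Int.natAbs_pos.mpr ha
    have hB : 0 < b.natAbs := Int.natAbs_pos.mpr hb
    have hlog : Real.log ((m : ℝ) ^ a.natAbs) = Real.log ((n : ℝ) ^ b.natAbs) := by
      rw [Real.log_pow, Real.log_pow]; exact habs
    have hm0 : (0 : ℝ) < m := by positivity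
    have hn0 : (0 : ℝ) < n := by positivity
    have hpow : (m : ℝ) ^ a.natAbs = (n : ℝ) ^ b.natAbs := by
      have := congrArg Real.exp hlog
      rwa [Real.exp_log (by positivity), Real.exp_log (by positivity)] at this
    have hpowN : m ^ a.natAbs = n ^ b.natAbs := by exact_mod_cast hpow
    exact key m n a.natAbs b.natAbs hm hn hA hB hpowN
  · rintro ⟨k, c, d, hk, hc, hd, hcd, rfl, rfl⟩
    refine ⟨d, c, Or.inl (by exact_mod_cast hd.ne'), ?_⟩
    push_cast
    rw [Real.log_pow, Real.log_pow]
    push_cast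
    ring
end
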